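/- The second associated curve of a nondegenerate contact curve is nondegenerate in P(W) ≅ P⁴: if β is a nondegenerate alternating bilinear form on ℂ⁴ and F : Fin 4 → ℂ[X] is a contact curve for β whose components F₀, F₁, F₂, F₃ are ℂ-linearly independent, then the six minors W_ij = F_i·F_j' − F_j·F_i' (0 ≤ i < j ≤ 3) span a ℂ-subspace of ℂ[X] of dimension exactly 5. -/

import Mathlib

set_option linter.unreachableTactic false
set_option linter.unusedTactic false
set_option linter.unnecessarySeqFocus false

open Polynomial Matrix

/-- The minor `W_ij = F_i·F_j' − F_j·F_i'` of a curve `F : Fin 4 → ℂ[X]`. -/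
noncomputable def minor4 (F : Fin 4 → ℂ[X]) (i j : Fin 4) : ℂ[X] :=
  F i * derivative (F j) - F j * derivative (F i)

/-- `F` is a contact curve for the alternating bilinear form with matrix `B`:
`Σ_{0 ≤ i < j ≤ 3} β(e_i,e_j)·W_ij = 0`. -/
noncomputable def IsContactCurve (B : Matrix (Fin 4) (Fin 4) ℂ) (F : Fin 4 → ℂ[X]) : Prop :=
  ∑ p ∈ Finset.univ.filter (fun p : Fin 4 × Fin 4 => p.1 < p.2),
    C (B p.1 p.2) * minor4 F p.1 p.2 = 0

/- ### Auxiliary lemmas -/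

lemma wronskian_dep (f g : ℂ[X]) (hw : wronskian f g = 0) :
    ∃ a b : ℂ, (a ≠ 0 ∨ b ≠ 0) ∧ a • f + b • g = 0 := by
  by_cases hg : g = 0
  · exact ⟨0, 1, Or.inr one_ne_zero, by simp [hg]⟩
  · set d := GCDMonoid.gcd f g with hd
    have hdvd1 : d ∣ f := gcd_dvd_left f g
    have hdvd2 : d ∣ g := gcd_dvd_right f g
    have hdne : d ≠ 0 := gcd_ne_zero_of_right hg
    have hf : f = d * (f / d) := (EuclideanDomain.mul_div_cancel' hdne hdvd1).symm
    have hg' : g = d * (g / d) := (EuclideanDomain.mul_div_cancel' hdne hdvd2).symm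
    have hcop : IsCoprime (f / d) (g / d) := isCoprime_div_gcd_div_gcd hg
    have hw2 : d * d * wronskian (f / d) (g / d) = 0 := by
      rw [← hw]
      conv_rhs => rw [hf, hg']
      simp only [wronskian, derivative_mul]
      ring
    have hw3 : wronskian (f / d) (g / d) = 0 := by
      rcases mul_eq_zero.mp hw2 with h | h
      · exact absurd h (mul_ne_zero hdne hdne)
      · exact h
    obtain ⟨h1, h2⟩ := hcop.wronskian_eq_zero_iff.mp hw3
    obtain ⟨a, e1⟩ : ∃ a, f / d = C a :=
      ⟨_, eq_C_of_natDegree_eq_zero (natDegree_eq_zero_of_derivative_eq_zero h1)⟩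
    obtain ⟨b, e2⟩ : ∃ b, g / d = C b :=
      ⟨_, eq_C_of_natDegree_eq_zero (natDegree_eq_zero_of_derivative_eq_zero h2)⟩
    refine ⟨b, -a, Or.inl ?_, ?_⟩
    · intro h0
      apply right_div_gcd_ne_zero (p := f) hg
      rw [e2, h0, map_zero]
    · rw [smul_eq_C_mul, smul_eq_C_mul, hf, hg', e1, e2, map_neg]
      ring

lemma contact_sum (M : Matrix (Fin 4) (Fin 4) ℂ) (F : Fin 4 → ℂ[X]) :
    (∑ p ∈ Finset.univ.filter (fun p : Fin 4 × Fin 4 => p.1 < p.2),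
      C (M p.1 p.2) * minor4 F p.1 p.2)
    = C (M 0 1) * minor4 F 0 1 + C (M 0 2) * minor4 F 0 2 + C (M 0 3) * minor4 F 0 3
      + C (M 1 2) * minor4 F 1 2 + C (M 1 3) * minor4 F 1 3 + C (M 2 3) * minor4 F 2 3 := by
  rw [Finset.sum_filter, ← Finset.univ_product_univ, Finset.sum_product]
  simp only [Fin.sum_univ_four]
  simp only [Fin.reduceLT, Fin.reduceEq, if_true, if_false, reduceIte]
  ring

lemma contact_decomp (u v : Fin 4 → ℂ) (F : Fin 4 → ℂ[X]) :
    wronskian (∑ i, C (u i) * F i) (∑ i, C (v i) * F i)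
      = C (u 0 * v 1 - u 1 * v 0) * minor4 F 0 1
      + C (u 0 * v 2 - u 2 * v 0) * minor4 F 0 2
      + C (u 0 * v 3 - u 3 * v 0) * minor4 F 0 3
      + C (u 1 * v 2 - u 2 * v 1) * minor4 F 1 2
      + C (u 1 * v 3 - u 3 * v 1) * minor4 F 1 3
      + C (u 2 * v 3 - u 3 * v 2) * minor4 F 2 3 := by
  simp only [wronskian, minor4, Fin.sum_univ_four, derivative_add, derivative_mul,
    derivative_C, zero_mul, zero_add, map_sub, C_mul]
  ring

lemma rank2_decomp (a b c d e f : ℂ) (hpf : a * f - b * e + c * d = 0)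
    (h : a ≠ 0 ∨ b ≠ 0 ∨ c ≠ 0 ∨ d ≠ 0 ∨ e ≠ 0 ∨ f ≠ 0) :
    ∃ u v : Fin 4 → ℂ,
      a = u 0 * v 1 - u 1 * v 0 ∧ b = u 0 * v 2 - u 2 * v 0 ∧ c = u 0 * v 3 - u 3 * v 0 ∧
      d = u 1 * v 2 - u 2 * v 1 ∧ e = u 1 * v 3 - u 3 * v 1 ∧ f = u 2 * v 3 - u 3 * v 2 := by
  rcases h with h | h | h | h | h | h
  · refine ⟨![a, 0, -d, -e], ![0, 1, b / a, c / a], ?_, ?_, ?_, ?_, ?_, ?_⟩ <;> simp <;>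
      field_simp <;> first
        | linear_combination -hpf
        | linear_combination hpf
        | linear_combination a * hpf
        | linear_combination f * hpf
        | linear_combination -2 * hpf
        | linear_combination -(1 + a) * hpf
        | linear_combination -(1 + f) * hpf
        | ring
  · refine ⟨![b, d, 0, -f], ![0, a / b, 1, c / b], ?_, ?_, ?_, ?_, ?_, ?_⟩ <;> simp <;>
      field_simp <;> first
        | linear_combination -hpf
        | linear_combination hpf
        | linear_combination a * hpf
        | linear_combination f * hpf
        | linear_combination -2 * hpf
        | linear_combination -(1 + a) * hpf
        | linear_combination -(1 + f) * hpf
        | ring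
  · refine ⟨![c, e, f, 0], ![0, a / c, b / c, 1], ?_, ?_, ?_, ?_, ?_, ?_⟩ <;> simp <;>
      field_simp <;> first
        | linear_combination -hpf
        | linear_combination hpf
        | linear_combination a * hpf
        | linear_combination f * hpf
        | linear_combination -2 * hpf
        | linear_combination -(1 + a) * hpf
        | linear_combination -(1 + f) * hpf
        | ring
  · refine ⟨![b, d, 0, -f], ![-a / d, 0, 1, e / d], ?_, ?_, ?_, ?_, ?_, ?_⟩ <;> simp <;>
      field_simp <;> first
        | linear_combination -hpf
        | linear_combination hpf
        | linear_combination a * hpf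
        | linear_combination f * hpf
        | linear_combination -2 * hpf
        | linear_combination -(1 + a) * hpf
        | linear_combination -(1 + f) * hpf
        | ring
  · refine ⟨![c, e, f, 0], ![-a / e, 0, d / e, 1], ?_, ?_, ?_, ?_, ?_, ?_⟩ <;> simp <;>
      field_simp <;> first
        | linear_combination -hpf
        | linear_combination hpf
        | linear_combination a * hpf
        | linear_combination f * hpf
        | linear_combination -2 * hpf
        | linear_combination -(1 + a) * hpf
        | linear_combination -(1 + f) * hpf
        | ring
  · refine ⟨![c, e, f, 0], ![-b / f, -d / f, 0, 1], ?_, ?_, ?_, ?_, ?_, ?_⟩ <;> simp <;>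
      field_simp <;> first
        | linear_combination -hpf
        | linear_combination hpf
        | linear_combination a * hpf
        | linear_combination f * hpf
        | linear_combination -2 * hpf
        | linear_combination -(1 + a) * hpf
        | linear_combination -(1 + f) * hpf
        | ring

lemma dep_vanish (u v : Fin 4 → ℂ) (α β : ℂ) (hne : α ≠ 0 ∨ β ≠ 0)
    (h : ∀ i, α * u i + β * v i = 0) (p q : Fin 4) : u p * v q - u q * v p = 0 := by
  rcases hne with hα | hβ
  · have hp : u p = -(β / α) * v p := by
      have := h p; field_simp; linear_combination this
    have hq : u q = -(β / α) * v q := by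
      have := h q; field_simp; linear_combination this
    rw [hp, hq]; ring
  · have hp : v p = -(α / β) * u p := by
      have := h p; field_simp; linear_combination this
    have hq : v q = -(α / β) * u q := by
      have := h q; field_simp; linear_combination this
    rw [hp, hq]; ring

lemma skew_entries {M : Matrix (Fin 4) (Fin 4) ℂ} (h : Mᵀ = -M) :
    ∀ i j : Fin 4, M j i = -M i j := by
  intro i j
  have := congrFun (congrFun h i) j
  simpa [Matrix.transpose_apply, Matrix.neg_apply] using this

lemma skew_diag {M : Matrix (Fin 4) (Fin 4) ℂ} (h : Mᵀ = -M) : ∀ i, M i i = 0 := by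
  intro i
  have h1 := skew_entries h i i
  have h2 : (2 : ℂ) * M i i = 0 := by linear_combination h1
  simpa using h2

lemma det_skew (M : Matrix (Fin 4) (Fin 4) ℂ) (h : Mᵀ = -M) :
    M.det = (M 0 1 * M 2 3 - M 0 2 * M 1 3 + M 0 3 * M 1 2) ^ 2 := by
  have hsk := skew_entries h
  have hd := skew_diag h
  have hM : M = !![0, M 0 1, M 0 2, M 0 3;
                   -M 0 1, 0, M 1 2, M 1 3;
                   -M 0 2, -M 1 2, 0, M 2 3;
                   -M 0 3, -M 1 3, -M 2 3, 0] := by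
    ext i j
    fin_cases i <;> fin_cases j <;>
      simp [hd, hsk 0 1, hsk 0 2, hsk 0 3, hsk 1 2, hsk 1 3, hsk 2 3]
  conv_lhs => rw [hM]
  rw [Matrix.det_succ_row_zero]
  simp (config := { decide := true }) [Fin.sum_univ_succ, Matrix.det_fin_three,
    Matrix.submatrix_apply, Fin.succAbove, show (Fin.castSucc (2 : Fin 3) : Fin 4) = 2 from rfl]
  ring

/-- A contact curve with linearly independent components admits no relation coming from
a nonzero alternating form with vanishing Pfaffian. -/
lemma rank2_contact_zero (M : Matrix (Fin 4) (Fin 4) ℂ) (h : Mᵀ = -M)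
    (hpf : M 0 1 * M 2 3 - M 0 2 * M 1 3 + M 0 3 * M 1 2 = 0)
    (F : Fin 4 → ℂ[X]) (hind : LinearIndependent ℂ F)
    (hc : IsContactCurve M F) : M = 0 := by
  have hsk := skew_entries h
  have hd := skew_diag h
  by_contra hM
  have h6 : M 0 1 ≠ 0 ∨ M 0 2 ≠ 0 ∨ M 0 3 ≠ 0 ∨ M 1 2 ≠ 0 ∨ M 1 3 ≠ 0 ∨ M 2 3 ≠ 0 := by
    by_contra hall
    push_neg at hall
    obtain ⟨e1, e2, e3, e4, e5, e6⟩ := hall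
    apply hM
    ext i j
    fin_cases i <;> fin_cases j <;>
      simp [hd, hsk 0 1, hsk 0 2, hsk 0 3, hsk 1 2, hsk 1 3, hsk 2 3, e1, e2, e3, e4, e5, e6]
  obtain ⟨u, v, ha, hb, hc', hd', he, hf⟩ :=
    rank2_decomp (M 0 1) (M 0 2) (M 0 3) (M 1 2) (M 1 3) (M 2 3) hpf h6
  have hw : wronskian (∑ i, C (u i) * F i) (∑ i, C (v i) * F i) = 0 := by
    rw [contact_decomp, ← ha, ← hb, ← hc', ← hd', ← he, ← hf, ← contact_sum]
    exact hc
  obtain ⟨α, β, hne, hdep⟩ := wronskian_dep _ _ hw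
  have hzero : ∀ i, α * u i + β * v i = 0 := by
    have hdep' : C α * (∑ i, C (u i) * F i) + C β * (∑ i, C (v i) * F i) = 0 := by
      rw [← smul_eq_C_mul, ← smul_eq_C_mul]; exact hdep
    have hsum : ∑ i, (α * u i + β * v i) • F i = 0 := by
      simp only [Fin.sum_univ_four, smul_eq_C_mul, C_add, C_mul] at hdep' ⊢
      linear_combination hdep'
    exact Fintype.linearIndependent_iff.mp hind _ hsum
  have hvan := fun p q => dep_vanish u v α β hne hzero p q
  rcases h6 with h0 | h0 | h0 | h0 | h0 | h0
  · exact h0 (by rw [ha]; exact hvan 0 1)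
  · exact h0 (by rw [hb]; exact hvan 0 2)
  · exact h0 (by rw [hc']; exact hvan 0 3)
  · exact h0 (by rw [hd']; exact hvan 1 2)
  · exact h0 (by rw [he]; exact hvan 1 3)
  · exact h0 (by rw [hf]; exact hvan 2 3)

/-- Two contact relations for a linearly independent curve are proportional. -/
lemma key_prop (B N : Matrix (Fin 4) (Fin 4) ℂ) (hB : Bᵀ = -B) (hdetB : B.det ≠ 0)
    (hN : Nᵀ = -N) (F : Fin 4 → ℂ[X]) (hind : LinearIndependent ℂ F)
    (h1 : IsContactCurve B F) (h2 : IsContactCurve N F) : ∃ t : ℂ, N = t • B := by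
  set pfB := B 0 1 * B 2 3 - B 0 2 * B 1 3 + B 0 3 * B 1 2 with hpfB
  set pfN := N 0 1 * N 2 3 - N 0 2 * N 1 3 + N 0 3 * N 1 2 with hpfN
  have hpfB0 : pfB ≠ 0 := by
    intro h0
    apply hdetB
    rw [det_skew B hB, ← hpfB, h0]
    ring
  set m := B 0 1 * N 2 3 + N 0 1 * B 2 3 - B 0 2 * N 1 3 - N 0 2 * B 1 3
      + B 0 3 * N 1 2 + N 0 3 * B 1 2 with hm
  by_cases hc0 : pfN = 0
  · refine ⟨0, ?_⟩
    rw [zero_smul]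
    exact rank2_contact_zero N hN hc0 F hind h2
  · -- find a root t₀ of pfN·t² + m·t + pfB
    obtain ⟨t₀, ht₀⟩ := Complex.exists_root
      (show (0 : WithBot ℕ) < (C pfN * X ^ 2 + C m * X + C pfB).degree by
        rw [degree_quadratic hc0]; norm_num)
    have heval : pfN * t₀ ^ 2 + m * t₀ + pfB = 0 := by
      simpa [IsRoot, eval_add, eval_mul, eval_pow] using ht₀
    set D := B + t₀ • N with hDdef
    have hDe : ∀ i j, D i j = B i j + t₀ * N i j := by
      intro i j
      simp [hDdef, Matrix.add_apply, Matrix.smul_apply, smul_eq_mul]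
    have hD : Dᵀ = -D := by
      rw [hDdef, Matrix.transpose_add, Matrix.transpose_smul, hB, hN]
      ext i j
      simp
      ring
    have hpfD : D 0 1 * D 2 3 - D 0 2 * D 1 3 + D 0 3 * D 1 2 = 0 := by
      simp only [hDe]
      linear_combination heval
    have hcD : IsContactCurve D F := by
      rw [IsContactCurve, contact_sum] at h1 h2 ⊢
      simp only [hDe, C_add, C_mul]
      linear_combination h1 + C t₀ * h2
    have hD0 : D = 0 := rank2_contact_zero D hD hpfD F hind hcD
    have ht0 : t₀ ≠ 0 := by
      intro h0
      rw [h0] at heval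
      apply hpfB0
      linear_combination heval
    refine ⟨-t₀⁻¹, ?_⟩
    ext i j
    have hD0e : B i j + t₀ * N i j = 0 := by
      have := congrFun (congrFun hD0 i) j
      rw [hDe i j] at this
      simpa using this
    simp only [Matrix.smul_apply, smul_eq_mul]
    field_simp
    first
      | linear_combination -hD0e
      | linear_combination hD0e
      | linear_combination 2 * hD0e

lemma vec6_val {α : Type*} (a0 a1 a2 a3 a4 a5 : α) :
    ![a0, a1, a2, a3, a4, a5] 0 = a0 ∧ ![a0, a1, a2, a3, a4, a5] 1 = a1 ∧
    ![a0, a1, a2, a3, a4, a5] 2 = a2 ∧ ![a0, a1, a2, a3, a4, a5] 3 = a3 ∧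
    ![a0, a1, a2, a3, a4, a5] 4 = a4 ∧ ![a0, a1, a2, a3, a4, a5] 5 = a5 :=
  ⟨rfl, rfl, rfl, rfl, rfl, rfl⟩

lemma vec6_apply_zero {α : Type*} (a0 a1 a2 a3 a4 a5 : α) : ![a0, a1, a2, a3, a4, a5] 0 = a0 := rfl
lemma vec6_apply_one {α : Type*} (a0 a1 a2 a3 a4 a5 : α) : ![a0, a1, a2, a3, a4, a5] 1 = a1 := rfl
lemma vec6_apply_two {α : Type*} (a0 a1 a2 a3 a4 a5 : α) : ![a0, a1, a2, a3, a4, a5] 2 = a2 := rfl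
lemma vec6_apply_three {α : Type*} (a0 a1 a2 a3 a4 a5 : α) : ![a0, a1, a2, a3, a4, a5] 3 = a3 := rfl
lemma vec6_apply_four {α : Type*} (a0 a1 a2 a3 a4 a5 : α) : ![a0, a1, a2, a3, a4, a5] 4 = a4 := rfl
lemma vec6_apply_five {α : Type*} (a0 a1 a2 a3 a4 a5 : α) : ![a0, a1, a2, a3, a4, a5] 5 = a5 := rfl

set_option maxHeartbeats 1000000 in
theorem second_associated_nondegenerate (B : Matrix (Fin 4) (Fin 4) ℂ)
    (halt : Bᵀ = -B) (hdet : B.det ≠ 0)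
    (F : Fin 4 → ℂ[X]) (hcontact : IsContactCurve B F)
    (hind : LinearIndependent ℂ F) :
    Module.finrank ℂ
      ↥(Submodule.span ℂ {P : ℂ[X] | ∃ i j : Fin 4, i < j ∧ P = minor4 F i j}) = 5 := by
  classical
  set v : Fin 6 → ℂ[X] := ![minor4 F 0 1, minor4 F 0 2, minor4 F 0 3,
    minor4 F 1 2, minor4 F 1 3, minor4 F 2 3] with hv
  have hset : {P : ℂ[X] | ∃ i j : Fin 4, i < j ∧ P = minor4 F i j} = Set.range v := by
    ext P
    constructor
    · rintro ⟨i, j, hij, rfl⟩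
      fin_cases i <;> fin_cases j <;>
        first
          | exact absurd hij (by decide)
          | (refine ⟨0, ?_⟩; simp [hv]; done)
          | (refine ⟨1, ?_⟩; simp [hv]; done)
          | (refine ⟨2, ?_⟩; simp [hv]; done)
          | (refine ⟨3, ?_⟩; simp [hv]; done)
          | (refine ⟨4, ?_⟩; simp [hv]; done)
          | (refine ⟨5, ?_⟩; simp [hv]; done)
    · rintro ⟨k, rfl⟩
      fin_cases k
      · exact ⟨0, 1, by decide, rfl⟩
      · exact ⟨0, 2, by decide, rfl⟩
      · exact ⟨0, 3, by decide, rfl⟩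
      · exact ⟨1, 2, by decide, rfl⟩
      · exact ⟨1, 3, by decide, rfl⟩
      · exact ⟨2, 3, by decide, rfl⟩
  rw [hset, ← Fintype.range_linearCombination ℂ v]
  set T := Fintype.linearCombination ℂ v with hT
  set bvec : Fin 6 → ℂ := ![B 0 1, B 0 2, B 0 3, B 1 2, B 1 3, B 2 3] with hbvec
  have hbne : bvec ≠ 0 := by
    intro h0
    apply hdet
    rw [det_skew B halt]
    have e0 : B 0 1 = 0 := congrFun h0 0
    have e1 : B 0 2 = 0 := congrFun h0 1
    have e2 : B 0 3 = 0 := congrFun h0 2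
    have e3 : B 1 2 = 0 := congrFun h0 3
    have e4 : B 1 3 = 0 := congrFun h0 4
    have e5 : B 2 3 = 0 := congrFun h0 5
    rw [e0, e1, e2, e3, e4, e5]
    ring
  have hker : LinearMap.ker T = Submodule.span ℂ {bvec} := by
    apply le_antisymm
    · intro c hc
      rw [LinearMap.mem_ker, hT, Fintype.linearCombination_apply] at hc
      set N : Matrix (Fin 4) (Fin 4) ℂ :=
        !![0, c 0, c 1, c 2; -c 0, 0, c 3, c 4; -c 1, -c 3, 0, c 5; -c 2, -c 4, -c 5, 0] with hN
      have hNalt : Nᵀ = -N := by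
        ext i j
        fin_cases i <;> fin_cases j <;> simp [hN]
      have hNc : IsContactCurve N F := by
        rw [IsContactCurve, contact_sum]
        rw [show N 0 1 = c 0 from rfl, show N 0 2 = c 1 from rfl, show N 0 3 = c 2 from rfl,
          show N 1 2 = c 3 from rfl, show N 1 3 = c 4 from rfl, show N 2 3 = c 5 from rfl]
        simp only [Fin.sum_univ_six, hv, smul_eq_C_mul, vec6_apply_zero, vec6_apply_one,
          vec6_apply_two, vec6_apply_three, vec6_apply_four, vec6_apply_five] at hc
        linear_combination hc
      obtain ⟨t, hNt⟩ := key_prop B N halt hdet hNalt F hind hcontact hNc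
      rw [Submodule.mem_span_singleton]
      refine ⟨t, ?_⟩
      have hNe : ∀ i j, N i j = t * B i j := by
        intro i j
        rw [hNt]
        simp [Matrix.smul_apply, smul_eq_mul]
      have h01 := hNe 0 1; rw [show N 0 1 = c 0 from rfl] at h01
      have h02 := hNe 0 2; rw [show N 0 2 = c 1 from rfl] at h02
      have h03 := hNe 0 3; rw [show N 0 3 = c 2 from rfl] at h03
      have h12 := hNe 1 2; rw [show N 1 2 = c 3 from rfl] at h12
      have h13 := hNe 1 3; rw [show N 1 3 = c 4 from rfl] at h13
      have h23 := hNe 2 3; rw [show N 2 3 = c 5 from rfl] at h23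
      funext k
      fin_cases k <;> simp [hbvec] <;>
        first
          | exact h01.symm | exact h02.symm | exact h03.symm
          | exact h12.symm | exact h13.symm | exact h23.symm
          | exact h01 | exact h02 | exact h03
          | exact h12 | exact h13 | exact h23
    · rw [Submodule.span_le, Set.singleton_subset_iff]
      rw [SetLike.mem_coe, LinearMap.mem_ker, hT, Fintype.linearCombination_apply]
      rw [IsContactCurve, contact_sum] at hcontact
      simp only [Fin.sum_univ_six, hv, hbvec, smul_eq_C_mul]
      simp only [vec6_apply_zero, vec6_apply_one, vec6_apply_two, vec6_apply_three,
        vec6_apply_four, vec6_apply_five]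
      linear_combination hcontact
  have hrank := LinearMap.finrank_range_add_finrank_ker T
  rw [hker, finrank_span_singleton hbne] at hrank
  have hdom : Module.finrank ℂ (Fin 6 → ℂ) = 6 := by
    simp [Module.finrank_fintype_fun_eq_card]
  rw [hdom] at hrank
  omega
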